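/- arXiv:1606.02815 — 6 statements merged into one kernel-verified Lean document; each statement's English description precedes it below -/
import Mathlib

section
/- If G is a bipartite graph in the class W₂ (well-covered, without isolated vertices, and the removal of any vertex leaves a well-covered graph with the same independence number), then G is a disjoint union of edges (a perfect matching with no other edges). -/
open Set

variable {V : Type*}

/-- `S` is an independent set of `G` contained in the vertex subset `W`
(i.e. an independent set of the induced subgraph `G[W]`). -/
def IsIndepOn (G : SimpleGraph V) (W S : Set V) : Prop :=
  S ⊆ W ∧ ∀ ⦃x⦄, x ∈ S → ∀ ⦃y⦄, y ∈ S → ¬ G.Adj x y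

/-- `S` is a maximal independent set of the induced subgraph `G[W]`. -/
def MaxIndepOn (G : SimpleGraph V) (W : Set V) (S : Finset V) : Prop :=
  IsIndepOn G W ↑S ∧ ∀ v ∈ W, v ∉ S → ¬ IsIndepOn G W (insert v ↑S)

/-- The independence number of the induced subgraph `G[W]`. -/
noncomputable def indepNumOn (G : SimpleGraph V) (W : Set V) : ℕ :=
  sSup {n | ∃ S : Finset V, IsIndepOn G W ↑S ∧ S.card = n}

/-- The induced subgraph `G[W]` is well-covered: every maximal independent set
has cardinality equal to the independence number. -/
def WellCoveredOn (G : SimpleGraph V) (W : Set V) : Prop :=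
  ∀ S : Finset V, MaxIndepOn G W S → S.card = indepNumOn G W

/-- The independence number `α(G)`. -/
noncomputable def indepNum (G : SimpleGraph V) : ℕ := indepNumOn G Set.univ

/-- `G` is well-covered. -/
def WellCovered (G : SimpleGraph V) : Prop := WellCoveredOn G Set.univ

/-- The induced subgraph `G[W]` has no isolated vertices. -/
def NoIsolatedOn (G : SimpleGraph V) (W : Set V) : Prop :=
  ∀ v ∈ W, ∃ u ∈ W, G.Adj v u

/-- The induced subgraph `G[W]` is in the class `W₂`: it has no isolated
vertices, is well-covered, and removing any vertex leaves a well-covered graph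
with the same independence number. -/
def W2On (G : SimpleGraph V) (W : Set V) : Prop :=
  NoIsolatedOn G W ∧ WellCoveredOn G W ∧
    ∀ v ∈ W, WellCoveredOn G (W \ {v}) ∧ indepNumOn G (W \ {v}) = indepNumOn G W

/-- `G` is in the class `W₂`. -/
def W2 (G : SimpleGraph V) : Prop := W2On G Set.univ

/-- The closed neighborhood `N_G[S]` of a set of vertices `S`. -/
def nbhd (G : SimpleGraph V) (S : Set V) : Set V :=
  {v | v ∈ S ∨ ∃ u ∈ S, G.Adj u v}

/-- The vertex set of `G_S = G \ N_G[S]`. -/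
def GDel (G : SimpleGraph V) (S : Set V) : Set V := Set.univ \ nbhd G S

/-- The induced subgraph `G[W]` is triangle-free. -/
def TriangleFreeOn (G : SimpleGraph V) (W : Set V) : Prop :=
  ∀ x ∈ W, ∀ y ∈ W, ∀ z ∈ W, ¬ (G.Adj x y ∧ G.Adj y z ∧ G.Adj x z)

/-- `G` is locally triangle-free: `G_v` is triangle-free for every vertex `v`. -/
def LocallyTriangleFree (G : SimpleGraph V) : Prop :=
  ∀ v : V, TriangleFreeOn G (GDel G {v})

/-- `G` is a join of two proper (nonempty, disjoint) subgraphs. -/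
def IsJoin (G : SimpleGraph V) : Prop :=
  ∃ V₁ V₂ : Set V, V₁.Nonempty ∧ V₂.Nonempty ∧ Disjoint V₁ V₂ ∧ V₁ ∪ V₂ = Set.univ ∧
    ∀ x ∈ V₁, ∀ y ∈ V₂, G.Adj x y


section Aux

open scoped Classical

variable [Fintype V] {G : SimpleGraph V}

lemma card_le_indepNumOn {W : Set V} {S : Finset V} (hS : IsIndepOn G W ↑S) :
    S.card ≤ indepNumOn G W :=
  le_csSup ⟨Fintype.card V, fun n ⟨T, _, hc⟩ => hc ▸ T.card_le_univ⟩ ⟨S, hS, rfl⟩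

lemma exists_max_ext {W : Set V} {S : Finset V} (hS : IsIndepOn G W ↑S) :
    ∃ T : Finset V, S ⊆ T ∧ MaxIndepOn G W T := by
  classical
  let F : Finset (Finset V) := Finset.univ.filter (fun T => IsIndepOn G W ↑T ∧ S ⊆ T)
  have hSF : S ∈ F := by simp [F, hS]
  obtain ⟨T, hTF, hTmax⟩ := F.exists_max_image Finset.card ⟨S, hSF⟩
  simp only [F, Finset.mem_filter] at hTF
  refine ⟨T, hTF.2.2, hTF.2.1, ?_⟩
  intro v hvW hvT hind
  have h1 : insert v T ∈ F := by
    simp only [F, Finset.mem_filter, Finset.mem_univ, true_and]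
    exact ⟨by rw [Finset.coe_insert]; exact hind,
      hTF.2.2.trans (Finset.subset_insert _ _)⟩
  have := hTmax _ h1
  rw [Finset.card_insert_of_notMem hvT] at this
  omega

lemma part_maxIndep (hNI : NoIsolatedOn G Set.univ) {A : Set V} [Fintype ↑A]
    (hA : ∀ x y : V, G.Adj x y → (x ∈ A ↔ y ∉ A)) :
    MaxIndepOn G Set.univ A.toFinset := by
  classical
  constructor
  · refine ⟨Set.subset_univ _, ?_⟩
    intro x hx y hy hadj
    have hx' : x ∈ A := by simpa using hx
    have hy' : y ∈ A := by simpa using hy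
    exact ((hA x y hadj).mp hx') hy'
  · intro b _ hbT hind
    have hbA : b ∉ A := by simpa using hbT
    obtain ⟨a, -, hadj⟩ := hNI b (Set.mem_univ b)
    have haA : a ∈ A := by
      by_contra haA
      exact hbA ((hA b a hadj).mpr haA)
    exact hind.2 (Set.mem_insert b _)
      (Set.mem_insert_of_mem _ (by simpa using haA)) hadj

lemma key (G : SimpleGraph V) (h2 : W2 G) (A : Set V)
    (hA : ∀ x y : V, G.Adj x y → (x ∈ A ↔ y ∉ A)) {v : V} (hv : v ∈ A) :
    ∃! u : V, G.Adj v u := by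
  classical
  obtain ⟨hNI, hWC, hdel⟩ := h2
  set α := indepNumOn G Set.univ with hα
  have hA' : ∀ x y : V, G.Adj x y → (x ∈ Aᶜ ↔ y ∉ Aᶜ) := by
    intro x y hxy
    have := hA x y hxy
    simp only [Set.mem_compl_iff]
    tauto
  have hAcard : A.toFinset.card = α := hWC _ (part_maxIndep hNI hA)
  have hBcard : Aᶜ.toFinset.card = α := hWC _ (part_maxIndep hNI hA')
  set D : V → Finset V := fun u => Finset.univ.filter (fun a => ∀ b, G.Adj a b → b = u)
    with hD
  have hDmem : ∀ u x, x ∈ D u ↔ ∀ b, G.Adj x b → b = u := by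
    intro u x; simp [hD]
  -- for every vertex u outside A, exactly one vertex has u as unique neighbor
  have hDcard : ∀ u ∈ Aᶜ.toFinset, (D u).card = 1 := by
    intro u hu
    have huB : u ∉ A := by simpa using hu
    set Bu : Finset V := Aᶜ.toFinset.erase u with hBu
    have hBumem : ∀ x, x ∈ Bu ↔ x ≠ u ∧ x ∉ A := by
      intro x; simp [hBu]
    have hBuIndep : IsIndepOn G (Set.univ \ {u}) ↑Bu := by
      constructor
      · intro x hx
        have hx' := (hBumem x).mp (by simpa using hx)
        exact ⟨Set.mem_univ _, by simpa using hx'.1⟩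
      · intro x hx y hy hadj
        have hx' := (hBumem x).mp (by simpa using hx)
        have hy' := (hBumem y).mp (by simpa using hy)
        exact hx'.2 ((hA x y hadj).mpr hy'.2)
    obtain ⟨T, hBuT, hTmax⟩ := exists_max_ext hBuIndep
    have hTcard : T.card = α := by
      rw [(hdel u (Set.mem_univ u)).1 T hTmax, (hdel u (Set.mem_univ u)).2]
    have huT : u ∉ T := by
      intro h
      have := hTmax.1.1 (Finset.mem_coe.mpr h)
      simp at this
    have hTeq : T = Bu ∪ D u := by
      apply Finset.Subset.antisymm
      · intro x hxT
        by_cases hxA : x ∈ A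
        · refine Finset.mem_union_right _ ((hDmem u x).mpr ?_)
          intro b hadj
          by_contra hbu
          have hbB : b ∉ A := (hA x b hadj).mp hxA
          have hbBu : b ∈ Bu := (hBumem b).mpr ⟨hbu, hbB⟩
          exact hTmax.1.2 (Finset.mem_coe.mpr hxT)
            (Finset.mem_coe.mpr (hBuT hbBu)) hadj
        · refine Finset.mem_union_left _ ((hBumem x).mpr ⟨?_, hxA⟩)
          intro h
          exact huT (h ▸ hxT)
      · intro x hx
        rcases Finset.mem_union.mp hx with h | h
        · exact hBuT h
        · have hxD := (hDmem u x).mp h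
          obtain ⟨n, -, hn⟩ := hNI x (Set.mem_univ x)
          have hnu : n = u := hxD n hn
          have hxu : x ≠ u := by
            rintro rfl
            exact G.irrefl (hnu ▸ hn)
          by_contra hxT
          apply hTmax.2 x ⟨Set.mem_univ x, by simpa using hxu⟩ hxT
          constructor
          · intro y hy
            rcases hy with rfl | hy
            · exact ⟨Set.mem_univ _, by simpa using hxu⟩
            · exact hTmax.1.1 hy
          · intro a ha b hb hadj
            rcases ha with rfl | ha <;> rcases hb with rfl | hb
            · exact G.irrefl hadj
            · exact huT (Finset.mem_coe.mp ((hxD b hadj) ▸ hb))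
            · exact huT (Finset.mem_coe.mp ((hxD a hadj.symm) ▸ ha))
            · exact hTmax.1.2 ha hb hadj
    have hdisj : Disjoint Bu (D u) := by
      rw [Finset.disjoint_left]
      intro x hxBu hxD
      have hxB : x ∉ A := ((hBumem x).mp hxBu).2
      obtain ⟨n, -, hn⟩ := hNI x (Set.mem_univ x)
      have hnu : n = u := (hDmem u x).mp hxD n hn
      exact hxB ((hA x u (hnu ▸ hn)).mpr huB)
    have hBucard : Bu.card = α - 1 := by
      rw [hBu, Finset.card_erase_of_mem hu, hBcard]
    have hα1 : 1 ≤ α := hBcard ▸ Finset.card_pos.mpr ⟨u, hu⟩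
    have hT2 := hTcard
    rw [hTeq, Finset.card_union_of_disjoint hdisj, hBucard] at hT2
    omega
  -- the sets D u are pairwise disjoint
  have hpd : ∀ x ∈ Aᶜ.toFinset, ∀ y ∈ Aᶜ.toFinset, x ≠ y → Disjoint (D x) (D y) := by
    intro x _ y _ hxy
    rw [Finset.disjoint_left]
    intro a hax hay
    obtain ⟨n, -, hn⟩ := hNI a (Set.mem_univ a)
    have h1 : n = x := (hDmem x a).mp hax n hn
    have h2 : n = y := (hDmem y a).mp hay n hn
    exact hxy (h1 ▸ h2)
  -- the D u cover A
  have hcover : Aᶜ.toFinset.biUnion D = A.toFinset := by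
    apply Finset.eq_of_subset_of_card_le
    · intro a ha
      obtain ⟨u, hu, haD⟩ := Finset.mem_biUnion.mp ha
      have huB : u ∉ A := by simpa using hu
      obtain ⟨n, -, hn⟩ := hNI a (Set.mem_univ a)
      have hnu : n = u := (hDmem u a).mp haD n hn
      exact Set.mem_toFinset.mpr ((hA a u (hnu ▸ hn)).mpr huB)
    · refine le_of_eq ?_
      calc A.toFinset.card = α := hAcard
        _ = Aᶜ.toFinset.card := hBcard.symm
        _ = ∑ u ∈ Aᶜ.toFinset, 1 := (Finset.card_eq_sum_ones _)
        _ = ∑ u ∈ Aᶜ.toFinset, (D u).card :=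
            Finset.sum_congr rfl fun u hu => (hDcard u hu).symm
        _ = (Aᶜ.toFinset.biUnion D).card := (Finset.card_biUnion hpd).symm
  have hvU : v ∈ Aᶜ.toFinset.biUnion D := hcover ▸ Set.mem_toFinset.mpr hv
  obtain ⟨u, hu, hvD⟩ := Finset.mem_biUnion.mp hvU
  have hvD' := (hDmem u v).mp hvD
  obtain ⟨n, -, hn⟩ := hNI v (Set.mem_univ v)
  have hnu : n = u := hvD' n hn
  exact ⟨u, hnu ▸ hn, fun b hb => hvD' b hb⟩

end Aux

/-- A bipartite graph in `W₂` is a disjoint union of edges: every vertex has a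
unique neighbor. -/
theorem stmt_2 [Fintype V] (G : SimpleGraph V) (h2 : W2 G)
    (hbip : ∃ A : Set V, ∀ x y : V, G.Adj x y → (x ∈ A ↔ y ∉ A)) :
    ∀ v : V, ∃! u : V, G.Adj v u := by
  obtain ⟨A, hA⟩ := hbip
  intro v
  by_cases hv : v ∈ A
  · exact key G h2 A hA hv
  · refine key G h2 Aᶜ (fun x y hxy => ?_) hv
    have := hA x y hxy
    simp only [Set.mem_compl_iff]
    tauto
end

section
/- Let G be a locally triangle-free graph in W₂ with α(G) = 2 and n vertices. Then every vertex of G has degree n − 3. -/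
open Set

variable {V : Type*}

lemma card_le_of_indepNum_two (G : SimpleGraph V) (hα : indepNum G = 2)
    {S : Finset V} (hS : IsIndepOn G Set.univ ↑S) : S.card ≤ 2 := by
  classical
  have hα' : sSup {n | ∃ S : Finset V, IsIndepOn G Set.univ ↑S ∧ S.card = n} = 2 := hα
  set T : Set ℕ := {n | ∃ S : Finset V, IsIndepOn G Set.univ ↑S ∧ S.card = n} with hT
  have hmem : S.card ∈ T := ⟨S, hS, rfl⟩
  have hbdd : BddAbove T := by
    by_contra hb
    rw [csSup_of_not_bddAbove hb, csSup_empty] at hα'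
    exact absurd hα' (by norm_num)
  have := le_csSup hbdd hmem
  rwa [hα'] at this

lemma exists_nonadj (G : SimpleGraph V) {W : Set V} (hW : WellCoveredOn G W)
    (hnum : indepNumOn G W = 2) {v : V} (hv : v ∈ W) :
    ∃ u ∈ W, u ≠ v ∧ ¬ G.Adj v u := by
  classical
  have hind : IsIndepOn G W ↑({v} : Finset V) := by
    constructor
    · simp [hv]
    · intro x hx y hy
      simp only [Finset.coe_singleton, Set.mem_singleton_iff] at hx hy
      subst hx; subst hy; exact G.loopless.irrefl _
  have hnotmax : ¬ MaxIndepOn G W ({v} : Finset V) := by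
    intro hmax
    have := hW _ hmax
    simp [hnum] at this
  rw [MaxIndepOn] at hnotmax
  push_neg at hnotmax
  obtain ⟨u, huW, hune, hins⟩ := hnotmax hind
  refine ⟨u, huW, by simpa using hune, ?_⟩
  exact hins.2 (x := v) (by simp) (y := u) (by simp)

/-- In a locally triangle-free graph in `W₂` with `α(G) = 2` and `n` vertices,
every vertex has degree `n - 3`. -/
theorem stmt_5 [Fintype V] (G : SimpleGraph V) (h2 : W2 G)
    (hloc : LocallyTriangleFree G) (hα : indepNum G = 2) :
    ∀ v : V, (G.neighborSet v).ncard = Fintype.card V - 3 := by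
  classical
  intro v
  obtain ⟨hiso, hwc, hdel⟩ := h2
  have hα' : indepNumOn G Set.univ = 2 := hα
  obtain ⟨u1, -, hu1v, hvu1⟩ := exists_nonadj G hwc hα' (Set.mem_univ v)
  obtain ⟨hwc', hnum'⟩ := hdel u1 (Set.mem_univ u1)
  have hnum'2 : indepNumOn G (Set.univ \ {u1}) = 2 := by rw [hnum']; exact hα'
  have hvmem : v ∈ Set.univ \ {u1} := ⟨Set.mem_univ v, by simp [hu1v.symm]⟩
  obtain ⟨u2, hu2W, hu2v, hvu2⟩ := exists_nonadj G hwc' hnum'2 hvmem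
  have hu2u1 : u2 ≠ u1 := by simpa using hu2W.2
  have hpair : ∀ x y : V, x ≠ v → y ≠ v → x ≠ y → ¬G.Adj v x → ¬G.Adj v y → G.Adj x y := by
    intro x y hxv hyv hxy hvx hvy
    by_contra hxyadj
    have hind : IsIndepOn G Set.univ ↑({v, x, y} : Finset V) := by
      constructor
      · intro a _; trivial
      · intro a ha b hb hab
        simp only [Finset.coe_insert, Finset.coe_singleton, Set.mem_insert_iff,
          Set.mem_singleton_iff] at ha hb
        rcases ha with rfl | rfl | rfl <;> rcases hb with rfl | rfl | rfl <;>
          first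
            | exact G.loopless.irrefl _ hab
            | exact hvx hab
            | exact hvy hab
            | exact hxyadj hab
            | exact hvx hab.symm
            | exact hvy hab.symm
            | exact hxyadj hab.symm
    have hcard : ({v, x, y} : Finset V).card = 3 :=
      Finset.card_eq_three.mpr ⟨v, x, y, hxv.symm, hyv.symm, hxy, rfl⟩
    have := card_le_of_indepNum_two G hα hind
    omega
  have hadj12 : G.Adj u1 u2 := hpair u1 u2 hu1v hu2v (hu2u1.symm) hvu1 hvu2
  have hmemG : ∀ x : V, x ≠ v → ¬G.Adj v x → x ∈ GDel G {v} := by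
    intro x hxv hvx
    refine ⟨trivial, ?_⟩
    intro hx
    rcases hx with hx | ⟨u, hu, hadj⟩
    · exact hxv (by simpa using hx)
    · simp only [Set.mem_singleton_iff] at hu; subst hu; exact hvx hadj
  have hclaim : ∀ w : V, w ≠ v → ¬G.Adj v w → w = u1 ∨ w = u2 := by
    intro w hwv hvw
    by_contra hno
    push_neg at hno
    obtain ⟨hw1, hw2⟩ := hno
    have h1w : G.Adj u1 w := hpair u1 w hu1v hwv (hw1.symm) hvu1 hvw
    have h2w : G.Adj u2 w := hpair u2 w hu2v hwv (hw2.symm) hvu2 hvw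
    exact hloc v u1 (hmemG u1 hu1v hvu1) u2 (hmemG u2 hu2v hvu2) w (hmemG w hwv hvw)
      ⟨hadj12, h2w, h1w⟩
  have hset : G.neighborSet v = Set.univ \ {v, u1, u2} := by
    ext x
    simp only [SimpleGraph.mem_neighborSet, Set.mem_diff, Set.mem_univ, true_and,
      Set.mem_insert_iff, Set.mem_singleton_iff]
    constructor
    · intro h
      push_neg
      refine ⟨fun e => ?_, fun e => ?_, fun e => ?_⟩
      · subst e; exact G.loopless.irrefl _ h
      · subst e; exact hvu1 h
      · subst e; exact hvu2 h
    · intro h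
      push_neg at h
      by_contra hadj
      rcases hclaim x h.1 hadj with rfl | rfl
      · exact h.2.1 rfl
      · exact h.2.2 rfl
  rw [hset, Set.ncard_diff (Set.subset_univ _) (Set.toFinite _), Set.ncard_univ,
    Nat.card_eq_fintype_card]
  have h3 : ({v, u1, u2} : Set V).ncard = 3 :=
    Set.ncard_eq_three.mpr ⟨v, u1, u2, hu1v.symm, by exact fun e => hu2v e.symm,
      hu2u1.symm, rfl⟩
  rw [h3]
end

section
/- Let G be a triangle-free graph in W₂ whose vertex set is partitioned as V(G) = S ∪ T ∪ U with |S| + |T| ≥ 2 and such that every vertex in U is adjacent to all vertices in S ∪ T. Then U is empty. -/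
open Set

variable {V : Type*}

/-- In a triangle-free graph in `W₂`, if `V = S ∪ T ∪ U` is a partition with
`|S| + |T| ≥ 2` and every vertex of `U` is adjacent to all of `S ∪ T`, then
`U = ∅`. -/
theorem stmt_7 [Fintype V] (G : SimpleGraph V) (h2 : W2 G)
    (htf : TriangleFreeOn G Set.univ)
    (S T U : Set V) (hST : Disjoint S T) (hSU : Disjoint S U) (hTU : Disjoint T U)
    (hcover : S ∪ T ∪ U = Set.univ) (hcard : 2 ≤ S.ncard + T.ncard)
    (hadj : ∀ u ∈ U, ∀ w ∈ S ∪ T, G.Adj u w) :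
    U = ∅ := by

  classical
  by_contra hU
  obtain ⟨v, hv⟩ := Set.nonempty_iff_ne_empty.mpr hU
  have hmem : ∀ w : V, w ∈ S ∪ T ∨ w ∈ U := by
    intro w
    have hw : w ∈ S ∪ T ∪ U := hcover ▸ Set.mem_univ w
    rcases hw with h | h
    · left; exact h
    · right; exact h
  have hvST : v ∉ S ∪ T := by
    rintro (h | h)
    · exact (hSU.ne_of_mem h hv) rfl
    · exact (hTU.ne_of_mem h hv) rfl
  have hSTindep : ∀ a ∈ S ∪ T, ∀ b ∈ S ∪ T, ¬ G.Adj a b := fun a ha b hb hab =>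
    htf v trivial a trivial b trivial ⟨hadj v hv a ha, hab, hadj v hv b hb⟩
  have hncST : 2 ≤ (S ∪ T).ncard := by
    rw [Set.ncard_union_eq hST (Set.toFinite S) (Set.toFinite T)]; exact hcard
  have hSTne : (S ∪ T).Nonempty := by
    rw [← Set.ncard_pos]; omega
  obtain ⟨a0, ha0⟩ := hSTne
  have hUindep : ∀ x ∈ U, ∀ y ∈ U, ¬ G.Adj x y := fun x hx y hy hxy =>
    htf x trivial a0 trivial y trivial
      ⟨hadj x hx a0 ha0, (hadj y hy a0 ha0).symm, hxy⟩
  set A : Finset V := (Set.toFinite (S ∪ T)).toFinset with hA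
  set B : Finset V := (Set.toFinite U).toFinset with hB
  have hAc : (A : Set V) = S ∪ T := Set.Finite.coe_toFinset _
  have hBc : (B : Set V) = U := Set.Finite.coe_toFinset _
  have hAcard : A.card = (S ∪ T).ncard := (Set.ncard_eq_toFinset_card _ _).symm
  have hBcard : B.card = U.ncard := (Set.ncard_eq_toFinset_card _ _).symm
  have hmemA : ∀ w : V, w ∈ A ↔ w ∈ S ∪ T := by
    intro w; rw [← Finset.mem_coe, hAc]
  have hmemB : ∀ w : V, w ∈ B ↔ w ∈ U := by
    intro w; rw [← Finset.mem_coe, hBc]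
  -- A is maximal independent on univ
  have hAmax : MaxIndepOn G Set.univ A := by
    refine ⟨⟨Set.subset_univ _, ?_⟩, ?_⟩
    · intro x hx y hy
      rw [hAc] at hx hy
      exact hSTindep x hx y hy
    · intro w _ hwA hind
      have hwU : w ∈ U := (hmem w).resolve_left (fun h => hwA ((hmemA w).mpr h))
      have ha0A : a0 ∈ (A : Set V) := by rw [hAc]; exact ha0
      exact hind.2 (Set.mem_insert _ _) (Set.mem_insert_of_mem _ ha0A)
        (hadj w hwU a0 ha0)
  -- B is maximal independent on univ
  have hBmax : MaxIndepOn G Set.univ B := by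
    refine ⟨⟨Set.subset_univ _, ?_⟩, ?_⟩
    · intro x hx y hy
      rw [hBc] at hx hy
      exact hUindep x hx y hy
    · intro w _ hwB hind
      have hwST : w ∈ S ∪ T := (hmem w).resolve_right (fun h => hwB ((hmemB w).mpr h))
      have hvB : v ∈ (B : Set V) := by rw [hBc]; exact hv
      exact hind.2 (Set.mem_insert _ _) (Set.mem_insert_of_mem _ hvB)
        (hadj v hv w hwST).symm
  have hwcu := h2.2.1
  have hABeq : A.card = B.card := by rw [hwcu A hAmax, hwcu B hBmax]
  have hAge2 : 2 ≤ A.card := by rw [hAcard]; exact hncST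
  -- pick another vertex of U
  obtain ⟨v', hv'B, hv'ne⟩ := Finset.exists_mem_ne (by omega : 1 < B.card) v
  have hv'U : v' ∈ U := (hmemB v').mp hv'B
  -- now work in W = univ \ {v}
  have hwc := (h2.2.2 v trivial).1
  have hAsub : (A : Set V) ⊆ Set.univ \ {v} := by
    rw [hAc]
    intro x hx
    exact ⟨trivial, fun h => hvST (h ▸ hx)⟩
  have hAmax' : MaxIndepOn G (Set.univ \ {v}) A := by
    refine ⟨⟨hAsub, ?_⟩, ?_⟩
    · intro x hx y hy
      rw [hAc] at hx hy
      exact hSTindep x hx y hy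
    · intro w hwW hwA hind
      have hwU : w ∈ U := (hmem w).resolve_left (fun h => hwA ((hmemA w).mpr h))
      have ha0A : a0 ∈ (A : Set V) := by rw [hAc]; exact ha0
      exact hind.2 (Set.mem_insert _ _) (Set.mem_insert_of_mem _ ha0A)
        (hadj w hwU a0 ha0)
  set B' : Finset V := B.erase v with hB'
  have hB'c : (B' : Set V) = U \ {v} := by
    rw [hB', Finset.coe_erase, hBc]
  have hB'max : MaxIndepOn G (Set.univ \ {v}) B' := by
    refine ⟨⟨?_, ?_⟩, ?_⟩
    · rw [hB'c]
      intro x hx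
      exact ⟨trivial, hx.2⟩
    · intro x hx y hy
      rw [hB'c] at hx hy
      exact hUindep x hx.1 y hy.1
    · intro w hwW hwB' hind
      have hwB : w ∉ B := fun h => hwB' (Finset.mem_erase.mpr ⟨hwW.2, h⟩)
      have hwST : w ∈ S ∪ T := (hmem w).resolve_right (fun h => hwB ((hmemB w).mpr h))
      have hv'B' : v' ∈ (B' : Set V) := by
        rw [hB'c]; exact ⟨hv'U, hv'ne⟩
      exact hind.2 (Set.mem_insert _ _) (Set.mem_insert_of_mem _ hv'B')
        (hadj v' hv'U w hwST).symm
  have h1 : A.card = indepNumOn G (Set.univ \ {v}) := hwc A hAmax'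
  have h2' : B'.card = indepNumOn G (Set.univ \ {v}) := hwc B' hB'max
  have hB'card : B'.card = B.card - 1 := by
    rw [hB', Finset.card_erase_of_mem ((hmemB v).mpr hv)]
  omega
end

section
/- Let G be a locally triangle-free graph in W₂ with α(G) ≥ 3, let (abc) be a triangle in G with G_{ab} ≠ ∅, and let A = N_G(a) \ N_G[b]. Suppose a vertex x and a vertex y in A are adjacent, and let v be a vertex of G_{ab}. Then v is adjacent to exactly one of x and y. -/
open Set

variable {V : Type*}

/-- Claim 1 of Lemma on the structure of `G[A]`: if `xy` is an edge of `G[A]`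
with `A = N_G(a) \ N_G[b]` and `v` is a vertex of `G_{ab} ≠ ∅`, then `v` is
adjacent to exactly one of `x` and `y`. -/
theorem stmt_9 [Fintype V] (G : SimpleGraph V) (h2 : W2 G)
    (hloc : LocallyTriangleFree G) (hα : 3 ≤ indepNum G)
    {a b c : V} (hab : G.Adj a b) (hbc : G.Adj b c) (hac : G.Adj a c)
    (hne : (GDel G {a, b}).Nonempty)
    {x y : V} (hx : x ∈ G.neighborSet a \ nbhd G {b})
    (hy : y ∈ G.neighborSet a \ nbhd G {b}) (hxy : G.Adj x y)
    {v : V} (hv : v ∈ GDel G {a, b}) :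
    Xor' (G.Adj v x) (G.Adj v y) := by
  -- basic facts
  have hvnb : v ∉ nbhd G {a, b} := hv.2
  have hva : ¬ G.Adj v a := fun h => hvnb (Or.inr ⟨a, Or.inl rfl, h.symm⟩)
  have hvne_a : v ≠ a := fun h => hvnb (Or.inl (by simp [h]))
  have hvb : v ∈ GDel G {b} := ⟨trivial, fun h => hvnb (by
    rcases h with h | ⟨u, hu, hadj⟩
    · exact Or.inl (Or.inr h)
    · exact Or.inr ⟨u, Or.inr hu, hadj⟩)⟩
  have hxb : x ∈ GDel G {b} := ⟨trivial, hx.2⟩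
  have hyb : y ∈ GDel G {b} := ⟨trivial, hy.2⟩
  have hax : G.Adj a x := hx.1
  have hay : G.Adj a y := hy.1
  -- not both
  have hnotboth : ¬ (G.Adj v x ∧ G.Adj v y) := by
    rintro ⟨hvx, hvy⟩
    exact hloc b x hxb y hyb v hvb ⟨hxy, hvy.symm, hvx.symm⟩
  -- at least one
  have hatleast : G.Adj v x ∨ G.Adj v y := by
    by_contra h
    push_neg at h
    obtain ⟨hvx, hvy⟩ := h
    have hxv : x ≠ v := fun heq => hva (heq ▸ hax).symm
    have hyv : y ≠ v := fun heq => hva (heq ▸ hay).symm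
    have haG : a ∈ GDel G {v} := ⟨trivial, by
      rintro (h | ⟨u, hu, hadj⟩)
      · exact hvne_a (Set.mem_singleton_iff.mp h).symm
      · exact hva ((Set.mem_singleton_iff.mp hu) ▸ hadj)⟩
    have hxG : x ∈ GDel G {v} := ⟨trivial, by
      rintro (h | ⟨u, hu, hadj⟩)
      · exact hxv (Set.mem_singleton_iff.mp h)
      · exact hvx ((Set.mem_singleton_iff.mp hu) ▸ hadj)⟩
    have hyG : y ∈ GDel G {v} := ⟨trivial, by
      rintro (h | ⟨u, hu, hadj⟩)
      · exact hyv (Set.mem_singleton_iff.mp h)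
      · exact hvy ((Set.mem_singleton_iff.mp hu) ▸ hadj)⟩
    exact hloc v a haG x hxG y hyG ⟨hax, hxy, hay⟩
  rcases hatleast with h | h
  · exact Or.inl ⟨h, fun h' => hnotboth ⟨h, h'⟩⟩
  · exact Or.inr ⟨h, fun h' => hnotboth ⟨h', h⟩⟩
end

section
/- Let G be a locally triangle-free graph in W₂ with α(G) ≥ 3 that is not a join of two proper subgraphs and that contains a triangle (abc). Then every vertex in N_G(a) ∩ N_G(b) is adjacent to every vertex of G_{ab} = G \ N_G[{a,b}]. -/
open Set

variable {V : Type*}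

/-- Every common neighbor of `a` and `b` is adjacent to all vertices of
`G_{ab}`. -/
theorem stmt_14 [Fintype V] (G : SimpleGraph V) (h2 : W2 G)
    (hloc : LocallyTriangleFree G) (hα : 3 ≤ indepNum G) (hjoin : ¬ IsJoin G)
    {a b c : V} (hab : G.Adj a b) (hbc : G.Adj b c) (hac : G.Adj a c) :
    ∀ u ∈ G.neighborSet a ∩ G.neighborSet b, ∀ v ∈ GDel G {a, b}, G.Adj u v := by
  intro u hu v hv
  by_contra huv
  simp only [GDel, nbhd, Set.mem_diff, Set.mem_setOf_eq, Set.mem_insert_iff,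
    Set.mem_singleton_iff, not_or, not_exists] at hv
  obtain ⟨-, hvab, hadj⟩ := hv
  push_neg at hvab
  have hva : ¬ G.Adj v a := fun h => hadj a ⟨Or.inl rfl, h.symm⟩
  have hvb : ¬ G.Adj v b := fun h => hadj b ⟨Or.inr rfl, h.symm⟩
  obtain ⟨hua, hub⟩ := hu
  have hua' : G.Adj a u := hua
  have hub' : G.Adj b u := hub
  have hmem : ∀ x : V, x ≠ v → ¬ G.Adj v x → x ∈ GDel G {v} := by
    intro x hx hadjx
    simp only [GDel, nbhd, Set.mem_diff, Set.mem_setOf_eq, Set.mem_singleton_iff, not_or]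
    refine ⟨trivial, hx, ?_⟩
    push_neg
    intro y hy
    subst hy; exact hadjx
  have huv' : u ≠ v := fun h => hva (h ▸ hua'.symm)
  exact hloc v a (hmem a (Ne.symm hvab.1) hva) b (hmem b (Ne.symm hvab.2) hvb)
    u (hmem u huv' (fun h => huv h.symm))
    ⟨hab, hub', hua'⟩
end

section
/- Let G be a triangle-free graph in W₂ with α(G) = 2. Then G is either two disjoint edges or a 5-cycle. -/
open Set

variable {V : Type*}

lemma stmt19_core [Fintype V] (G : SimpleGraph V)
    (P1 : ∃ u v : V, u ≠ v ∧ ¬ G.Adj u v)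
    (P2 : ∀ x y z : V, x ≠ y → x ≠ z → y ≠ z → G.Adj x y ∨ G.Adj x z ∨ G.Adj y z)
    (P3 : ∀ x y z : V, G.Adj x y → G.Adj y z → G.Adj x z → False)
    (P4 : ∀ v : V, ∃ u : V, G.Adj v u)
    (P5 : ∀ v : V, ∃ u : V, u ≠ v ∧ ¬ G.Adj v u)
    (P6 : ∀ v u : V, u ≠ v → ∃ w : V, w ≠ v ∧ w ≠ u ∧ ¬ G.Adj u w) :
    (Fintype.card V = 4 ∧ ∀ v : V, ∃! u : V, G.Adj v u) ∨
    (Fintype.card V = 5 ∧ G.Connected ∧ ∀ v : V, (G.neighborSet v).ncard = 2) := by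
  classical
  have deg_le : ∀ v a b c : V, G.Adj v a → G.Adj v b → G.Adj v c →
      a ≠ b → a ≠ c → b ≠ c → False := by
    intro v a b c ha hb hc hab hac hbc
    have nab : ¬ G.Adj a b := fun h => P3 v a b ha h hb
    have nac : ¬ G.Adj a c := fun h => P3 v a c ha h hc
    have nbc : ¬ G.Adj b c := fun h => P3 v b c hb h hc
    rcases P2 a b c hab hac hbc with h | h | h <;> tauto
  have clique : ∀ v x y : V, x ≠ v → y ≠ v → x ≠ y →
      ¬ G.Adj v x → ¬ G.Adj v y → G.Adj x y := by
    intro v x y hxv hyv hxy hnx hny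
    rcases P2 v x y hxv.symm hyv.symm hxy with h | h | h <;> tauto
  have three_of : ∀ S : Finset V, 3 ≤ S.card →
      ∃ a b c : V, a ∈ S ∧ b ∈ S ∧ c ∈ S ∧ a ≠ b ∧ a ≠ c ∧ b ≠ c := by
    intro S h
    obtain ⟨T, hT, hc⟩ := Finset.exists_subset_card_eq h
    obtain ⟨a, b, c, hab, hac, hbc, rfl⟩ := Finset.card_eq_three.mp hc
    exact ⟨a, b, c, hT (by simp), hT (by simp), hT (by simp), hab, hac, hbc⟩
  obtain ⟨u₀, v₀, hne₀, hnadj₀⟩ := P1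
  -- bounds on the number of vertices
  have hge : 2 ≤ Fintype.card V := Fintype.one_lt_card_iff_nontrivial.mpr ⟨u₀, v₀, hne₀⟩
  have nbrs_le : ∀ v : V, (Finset.univ.filter (fun x => G.Adj v x)).card ≤ 2 := by
    intro v
    by_contra h
    push_neg at h
    obtain ⟨a, b, c, ha, hb, hc, hab, hac, hbc⟩ := three_of _ h
    simp only [Finset.mem_filter] at ha hb hc
    exact deg_le v a b c ha.2 hb.2 hc.2 hab hac hbc
  have nonnbrs_le : ∀ v : V,
      (Finset.univ.filter (fun x => x ≠ v ∧ ¬ G.Adj v x)).card ≤ 2 := by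
    intro v
    by_contra h
    push_neg at h
    obtain ⟨a, b, c, ha, hb, hc, hab, hac, hbc⟩ := three_of _ h
    simp only [Finset.mem_filter] at ha hb hc
    exact P3 a b c (clique v a b ha.2.1 hb.2.1 hab ha.2.2 hb.2.2)
      (clique v b c hb.2.1 hc.2.1 hbc hb.2.2 hc.2.2)
      (clique v a c ha.2.1 hc.2.1 hac ha.2.2 hc.2.2)
  have hle : Fintype.card V ≤ 5 := by
    have hsub : (Finset.univ : Finset V) ⊆
        {u₀} ∪ Finset.univ.filter (fun x => G.Adj u₀ x) ∪
          Finset.univ.filter (fun x => x ≠ u₀ ∧ ¬ G.Adj u₀ x) := by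
      intro x _
      by_cases hx : x = u₀
      · simp [hx]
      · by_cases hadj : G.Adj u₀ x <;> simp [hx, hadj]
    calc Fintype.card V = (Finset.univ : Finset V).card := rfl
      _ ≤ _ := Finset.card_le_card hsub
      _ ≤ ({u₀} : Finset V).card + (Finset.univ.filter (fun x => G.Adj u₀ x)).card +
            (Finset.univ.filter (fun x => x ≠ u₀ ∧ ¬ G.Adj u₀ x)).card := by
          exact le_trans (Finset.card_union_le _ _)
            (by exact add_le_add_left (Finset.card_union_le _ _) _)
      _ ≤ 1 + 2 + 2 := by
          have := nbrs_le u₀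
          have := nonnbrs_le u₀
          simp only [Finset.card_singleton]
          omega
      _ = 5 := rfl
  -- rule out 2 and 3 vertices
  have hn2 : Fintype.card V ≠ 2 := by
    intro hc
    obtain ⟨w, hw⟩ := P4 u₀
    have huniv : ({u₀, v₀} : Finset V) = Finset.univ := by
      apply Finset.eq_univ_of_card
      rw [Finset.card_pair hne₀, hc]
    have hwmem : w ∈ ({u₀, v₀} : Finset V) := huniv ▸ Finset.mem_univ w
    simp only [Finset.mem_insert, Finset.mem_singleton] at hwmem
    rcases hwmem with rfl | rfl
    · exact G.irrefl hw
    · exact hnadj₀ hw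
  have hn3 : Fintype.card V ≠ 3 := by
    intro hc
    obtain ⟨a, ha⟩ := P4 u₀
    obtain ⟨b, hbv, hnb⟩ := P5 u₀
    have hav : a ≠ u₀ := fun h => G.irrefl (h ▸ ha)
    have hba : b ≠ a := fun h => hnb (h ▸ ha)
    have huniv : ({u₀, a, b} : Finset V) = Finset.univ := by
      apply Finset.eq_univ_of_card
      rw [show ({u₀, a, b} : Finset V).card = 3 by
        rw [Finset.card_insert_of_notMem (by
            simp only [Finset.mem_insert, Finset.mem_singleton]
            push_neg
            exact ⟨Ne.symm hav, Ne.symm hbv⟩),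
          Finset.card_pair hba.symm], hc]
    obtain ⟨c, hcb⟩ := P4 b
    have hcmem : c ∈ ({u₀, a, b} : Finset V) := huniv ▸ Finset.mem_univ c
    simp only [Finset.mem_insert, Finset.mem_singleton] at hcmem
    have hca : c = a := by
      rcases hcmem with rfl | rfl | rfl
      · exact absurd hcb.symm hnb
      · rfl
      · exact absurd hcb (G.loopless.irrefl _)
    rw [hca] at hcb
    obtain ⟨d, hda, hnd⟩ := P5 a
    have hdmem : d ∈ ({u₀, a, b} : Finset V) := huniv ▸ Finset.mem_univ d
    simp only [Finset.mem_insert, Finset.mem_singleton] at hdmem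
    rcases hdmem with rfl | rfl | rfl
    · exact hnd ha.symm
    · exact hda rfl
    · exact hnd hcb.symm
  have hcases : Fintype.card V = 4 ∨ Fintype.card V = 5 := by omega
  rcases hcases with hc4 | hc5
  · -- four vertices: a perfect matching
    left
    refine ⟨hc4, fun v => ?_⟩
    obtain ⟨a, ha⟩ := P4 v
    refine ⟨a, ha, fun b hb => ?_⟩
    by_contra hba
    have hav : a ≠ v := fun h => G.irrefl (h ▸ ha)
    have hbv : b ≠ v := fun h => G.irrefl (h ▸ hb)
    have hnab : ¬ G.Adj a b := fun h => P3 v a b ha h hb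
    have hcard3 : ({v, a, b} : Finset V).card = 3 := by
      rw [Finset.card_insert_of_notMem (by
          simp only [Finset.mem_insert, Finset.mem_singleton]
          push_neg
          exact ⟨hav.symm, hbv.symm⟩), Finset.card_pair (Ne.symm hba)]
    have hssub : ({v, a, b} : Finset V) ⊂ Finset.univ := by
      rw [Finset.ssubset_univ_iff]
      intro h
      rw [h, Finset.card_univ, hc4] at hcard3
      omega
    obtain ⟨c, -, hcmem⟩ := Finset.exists_of_ssubset hssub
    simp only [Finset.mem_insert, Finset.mem_singleton] at hcmem
    push_neg at hcmem
    obtain ⟨hcv, hca, hcb⟩ := hcmem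
    have hnvc : ¬ G.Adj v c := fun h =>
      deg_le v a b c ha hb h (Ne.symm hba) (Ne.symm hca) (Ne.symm hcb)
    have huniv : ({v, a, b, c} : Finset V) = Finset.univ := by
      apply Finset.eq_univ_of_card
      rw [show ({v, a, b, c} : Finset V).card = 4 by
        rw [Finset.card_insert_of_notMem (by
            simp only [Finset.mem_insert, Finset.mem_singleton]
            push_neg
            exact ⟨hav.symm, hbv.symm, hcv.symm⟩),
          Finset.card_insert_of_notMem (by
            simp only [Finset.mem_insert, Finset.mem_singleton]
            push_neg
            exact ⟨Ne.symm hba, hca.symm⟩),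
          Finset.card_pair (Ne.symm hcb)], hc4]
    rcases P2 a b c (Ne.symm hba) (Ne.symm hca) (Ne.symm hcb) with h | h | h
    · exact hnab h
    · -- c adjacent to a : delete b, then a dominates
      obtain ⟨w, hwb, hwa, hnw⟩ := P6 b a (Ne.symm hba)
      have hwmem : w ∈ ({v, a, b, c} : Finset V) := huniv ▸ Finset.mem_univ w
      simp only [Finset.mem_insert, Finset.mem_singleton] at hwmem
      rcases hwmem with rfl | rfl | rfl | rfl
      · exact hnw ha.symm
      · exact hwa rfl
      · exact hwb rfl
      · exact hnw h
    · -- c adjacent to b : delete a, then b dominates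
      obtain ⟨w, hwa, hwb, hnw⟩ := P6 a b hba
      have hwmem : w ∈ ({v, a, b, c} : Finset V) := huniv ▸ Finset.mem_univ w
      simp only [Finset.mem_insert, Finset.mem_singleton] at hwmem
      rcases hwmem with rfl | rfl | rfl | rfl
      · exact hnw hb.symm
      · exact hwa rfl
      · exact hwb rfl
      · exact hnw h
  · -- five vertices: the pentagon
    right
    have deg2 : ∀ v : V, ∃ a b : V, a ≠ b ∧ G.Adj v a ∧ G.Adj v b ∧
        ∀ x : V, G.Adj v x → x = a ∨ x = b := by
      intro v
      obtain ⟨a, ha⟩ := P4 v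
      by_cases hb : ∃ b, b ≠ a ∧ G.Adj v b
      · obtain ⟨b, hba, hb⟩ := hb
        refine ⟨a, b, Ne.symm hba, ha, hb, fun x hx => ?_⟩
        by_contra h
        push_neg at h
        exact deg_le v a b x ha hb hx (Ne.symm hba) (Ne.symm h.1) (Ne.symm h.2)
      · push_neg at hb
        exfalso
        have hav : a ≠ v := fun h => G.irrefl (h ▸ ha)
        have hcard : (Finset.univ \ {v, a} : Finset V).card = 3 := by
          rw [Finset.card_sdiff_of_subset (Finset.subset_univ _), Finset.card_univ, hc5,
            Finset.card_pair (Ne.symm hav)]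
        obtain ⟨x, y, z, hx, hy, hz, hxy, hxz, hyz⟩ := three_of _ (le_of_eq hcard.symm)
        simp only [Finset.mem_sdiff, Finset.mem_univ, Finset.mem_insert,
          Finset.mem_singleton, true_and] at hx hy hz
        push_neg at hx hy hz
        have hnx : ¬ G.Adj v x := hb x hx.2
        have hny : ¬ G.Adj v y := hb y hy.2
        have hnz : ¬ G.Adj v z := hb z hz.2
        exact P3 x y z (clique v x y hx.1 hy.1 hxy hnx hny)
          (clique v y z hy.1 hz.1 hyz hny hnz)
          (clique v x z hx.1 hz.1 hxz hnx hnz)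
    refine ⟨hc5, ?_, ?_⟩
    · rw [SimpleGraph.connected_iff]
      refine ⟨?_, Fintype.card_pos_iff.mp (by omega)⟩
      intro u v
      by_cases huv : u = v
      · subst huv
        exact SimpleGraph.Reachable.refl u
      · by_cases hadj : G.Adj u v
        · exact hadj.reachable
        · obtain ⟨a, b, hab, ha, hb, -⟩ := deg2 u
          obtain ⟨c, d, hcd, hc, hd, -⟩ := deg2 v
          have hau : a ≠ u := fun h => G.irrefl (h ▸ ha)
          have hbu : b ≠ u := fun h => G.irrefl (h ▸ hb)
          have hcv : c ≠ v := fun h => G.irrefl (h ▸ hc)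
          have hdv : d ≠ v := fun h => G.irrefl (h ▸ hd)
          have hav : a ≠ v := fun h => hadj (h ▸ ha)
          have hbv : b ≠ v := fun h => hadj (h ▸ hb)
          have hcu : c ≠ u := fun h => hadj ((h ▸ hc).symm)
          have hdu : d ≠ u := fun h => hadj ((h ▸ hd).symm)
          have hkey : a = c ∨ a = d ∨ b = c ∨ b = d := by
            by_contra h
            push_neg at h
            obtain ⟨hac, had, hbc, hbd⟩ := h
            have h6 : ({u, v, a, b, c, d} : Finset V).card = 6 := by
              rw [Finset.card_insert_of_notMem (by
                  simp only [Finset.mem_insert, Finset.mem_singleton]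
                  push_neg
                  exact ⟨huv, hau.symm, hbu.symm, hcu.symm, hdu.symm⟩),
                Finset.card_insert_of_notMem (by
                  simp only [Finset.mem_insert, Finset.mem_singleton]
                  push_neg
                  exact ⟨hav.symm, hbv.symm, hcv.symm, hdv.symm⟩),
                Finset.card_insert_of_notMem (by
                  simp only [Finset.mem_insert, Finset.mem_singleton]
                  push_neg
                  exact ⟨hab, hac, had⟩),
                Finset.card_insert_of_notMem (by
                  simp only [Finset.mem_insert, Finset.mem_singleton]
                  push_neg
                  exact ⟨hbc, hbd⟩),
                Finset.card_pair hcd]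
            have hle6 := Finset.card_le_univ ({u, v, a, b, c, d} : Finset V)
            rw [h6] at hle6
            omega
          rcases hkey with rfl | rfl | rfl | rfl
          · exact ha.reachable.trans hc.reachable.symm
          · exact ha.reachable.trans hd.reachable.symm
          · exact hb.reachable.trans hc.reachable.symm
          · exact hb.reachable.trans hd.reachable.symm
    · intro v
      obtain ⟨a, b, hab, ha, hb, hmax⟩ := deg2 v
      have hset : G.neighborSet v = {a, b} := by
        ext x
        simp only [SimpleGraph.mem_neighborSet, Set.mem_insert_iff, Set.mem_singleton_iff]
        exact ⟨fun hx => hmax x hx, fun hx => by rcases hx with rfl | rfl <;> assumption⟩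
      rw [hset, Set.ncard_pair hab]

/-- A triangle-free graph in `W₂` with `α(G) = 2` is either two disjoint edges
or a 5-cycle. -/
theorem stmt_19 [Fintype V] (G : SimpleGraph V) (h2 : W2 G)
    (htf : TriangleFreeOn G Set.univ) (hα : indepNum G = 2) :
    (Fintype.card V = 4 ∧ ∀ v : V, ∃! u : V, G.Adj v u) ∨
    (Fintype.card V = 5 ∧ G.Connected ∧ ∀ v : V, (G.neighborSet v).ncard = 2) := by
  classical
  obtain ⟨hiso, hwc, hdel⟩ := h2
  have hbdd : ∀ W : Set V, BddAbove {n | ∃ S : Finset V, IsIndepOn G W ↑S ∧ S.card = n} := by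
    intro W
    refine ⟨Fintype.card V, fun n hn => ?_⟩
    obtain ⟨S, -, hS⟩ := hn
    exact hS ▸ Finset.card_le_univ S
  have P3 : ∀ x y z : V, G.Adj x y → G.Adj y z → G.Adj x z → False := by
    intro x y z h1 h2 h3
    exact htf x (Set.mem_univ x) y (Set.mem_univ y) z (Set.mem_univ z) ⟨h1, h2, h3⟩
  have P2 : ∀ x y z : V, x ≠ y → x ≠ z → y ≠ z → G.Adj x y ∨ G.Adj x z ∨ G.Adj y z := by
    intro x y z hxy hxz hyz
    by_contra h
    push_neg at h
    obtain ⟨h1, h2, h3⟩ := h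
    have hind : IsIndepOn G Set.univ ↑({x, y, z} : Finset V) := by
      refine ⟨Set.subset_univ _, ?_⟩
      intro p hp q hq hadj
      simp only [Finset.coe_insert, Finset.coe_singleton, Set.mem_insert_iff,
        Set.mem_singleton_iff] at hp hq
      rcases hp with rfl | rfl | rfl <;> rcases hq with rfl | rfl | rfl <;>
        first
          | exact G.loopless.irrefl _ hadj
          | exact h1 hadj | exact h2 hadj | exact h3 hadj
          | exact h1 hadj.symm | exact h2 hadj.symm | exact h3 hadj.symm
    have hcard : ({x, y, z} : Finset V).card = 3 := by
      rw [Finset.card_insert_of_notMem (by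
          simp only [Finset.mem_insert, Finset.mem_singleton]
          push_neg
          exact ⟨hxy, hxz⟩), Finset.card_pair hyz]
    have h3le : 3 ≤ indepNum G :=
      le_csSup (hbdd Set.univ) ⟨{x, y, z}, hind, hcard⟩
    omega
  have P1 : ∃ u v : V, u ≠ v ∧ ¬ G.Adj u v := by
    have hne : {n | ∃ S : Finset V, IsIndepOn G Set.univ ↑S ∧ S.card = n}.Nonempty := by
      refine ⟨0, ∅, ⟨Set.subset_univ _, ?_⟩, rfl⟩
      intro p hp
      simp at hp
    have hmem : indepNum G ∈ {n | ∃ S : Finset V, IsIndepOn G Set.univ ↑S ∧ S.card = n} :=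
      Nat.sSup_mem hne (hbdd Set.univ)
    rw [hα] at hmem
    obtain ⟨S, hSind, hScard⟩ := hmem
    obtain ⟨u, v, huv, rfl⟩ := Finset.card_eq_two.mp hScard
    refine ⟨u, v, huv, fun h => ?_⟩
    exact hSind.2 (by simp) (by simp) h
  have P4 : ∀ v : V, ∃ u : V, G.Adj v u := by
    intro v
    obtain ⟨u, -, hu⟩ := hiso v (Set.mem_univ v)
    exact ⟨u, hu⟩
  have P5 : ∀ v : V, ∃ u : V, u ≠ v ∧ ¬ G.Adj v u := by
    intro v
    by_contra h
    push_neg at h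
    have hmax : MaxIndepOn G Set.univ {v} := by
      constructor
      · refine ⟨Set.subset_univ _, ?_⟩
        intro p hp q hq hadj
        simp only [Finset.coe_singleton, Set.mem_singleton_iff] at hp hq
        subst hp; subst hq
        exact G.loopless.irrefl _ hadj
      · intro u _ hu hind
        have huv : u ≠ v := by simpa using hu
        exact hind.2 (Set.mem_insert_iff.mpr (Or.inr (by simp)))
          (Set.mem_insert u _) (h u huv)
    have := hwc {v} hmax
    simp only [Finset.card_singleton] at this
    rw [show indepNumOn G Set.univ = indepNum G from rfl, hα] at this
    omega
  have P6 : ∀ v u : V, u ≠ v → ∃ w : V, w ≠ v ∧ w ≠ u ∧ ¬ G.Adj u w := by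
    intro v u huv
    by_contra h
    push_neg at h
    obtain ⟨hwc', hind'⟩ := hdel v (Set.mem_univ v)
    have hmax : MaxIndepOn G (Set.univ \ {v}) {u} := by
      constructor
      · constructor
        · intro p hp
          simp only [Finset.coe_singleton, Set.mem_singleton_iff] at hp
          exact ⟨Set.mem_univ p, by simp [hp, huv]⟩
        · intro p hp q hq hadj
          simp only [Finset.coe_singleton, Set.mem_singleton_iff] at hp hq
          subst hp; subst hq
          exact G.loopless.irrefl _ hadj
      · intro w hw hwu hind
        have hwv : w ≠ v := by
          have := hw.2
          simpa using this
        have hwu' : w ≠ u := by simpa using hwu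
        exact hind.2 (Set.mem_insert_iff.mpr (Or.inr (by simp)))
          (Set.mem_insert w _) (h w hwv hwu')
    have h1 := hwc' {u} hmax
    simp only [Finset.card_singleton] at h1
    rw [hind', show indepNumOn G Set.univ = indepNum G from rfl, hα] at h1
    omega
  exact stmt19_core G P1 P2 P3 P4 P5 P6
end
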